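/- Let C ⊆ I be a coalition with |C| = ĸ̂ such that u_i + r_i ≤ u_j + r_j for all i ∈ C and j ∉ C, and let r be zero-sum. Then r ∈ S₀ if and only if ∑_{i∈C} (u_i + r_i) ≥ 0. -/

import Mathlib

open Finset

/-- `r ∈ S₀`: `r` is zero-sum and `∑_{i∈C}(u_i + r_i) ≥ 0` for every coalition `C`
with `|C| ≥ ĸ̂ = I - κ + 1` (characterization of stable promises contingent on the reform). -/
def inS0 {I : ℕ} (κ : ℕ) (u r : Fin I → ℝ) : Prop :=
  (∑ i, r i = 0) ∧
  ∀ C : Finset (Fin I), I - κ + 1 ≤ C.card → 0 ≤ ∑ i ∈ C, (u i + r i)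

/-- Total promises transfer `T(r) = (1/2) ∑_i |r_i|`. -/
noncomputable def totT {I : ℕ} (r : Fin I → ℝ) : ℝ := (∑ i, |r i|) / 2

/-- `r ∈ E`: `r` is stable and minimizes the total transfer over `S₀`. -/
def inE {I : ℕ} (κ : ℕ) (u r : Fin I → ℝ) : Prop :=
  inS0 κ u r ∧ ∀ r' : Fin I → ℝ, inS0 κ u r' → totT r ≤ totT r'

/-- if `C` has cardinality `ĸ̂` and collects the smallest post-promise
intensities, then `r ∈ S₀` iff `∑_{i∈C}(u_i + r_i) ≥ 0`. -/
theorem stability_via_smallest_coalition {I : ℕ} (κ : ℕ) (hκ : 1 ≤ κ) (hκI : κ ≤ I)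
    (u r : Fin I → ℝ) (hr : ∑ i, r i = 0)
    (C : Finset (Fin I)) (hC : C.card = I - κ + 1)
    (hord : ∀ i ∈ C, ∀ j : Fin I, j ∉ C → u i + r i ≤ u j + r j) :
    inS0 κ u r ↔ 0 ≤ ∑ i ∈ C, (u i + r i) := by
  set f : Fin I → ℝ := fun i => u i + r i with hf
  constructor
  · intro h
    exact h.2 C (le_of_eq hC.symm)
  · intro hsum
    refine ⟨hr, ?_⟩
    intro C' hC'
    -- C is nonempty
    have hne : C.Nonempty := Finset.card_pos.mp (by omega)
    -- some element of C has nonnegative f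
    obtain ⟨i₀, hi₀, hfi₀⟩ := Finset.exists_le_of_sum_le hne
      (show ∑ i ∈ C, (0:ℝ) ≤ ∑ i ∈ C, f i by simpa using hsum)
    -- every element outside C has nonnegative f
    have hpos : ∀ j : Fin I, j ∉ C → 0 ≤ f j := fun j hj =>
      le_trans hfi₀ (hord i₀ hi₀ j hj)
    have hcard : (C \ C').card ≤ (C' \ C).card := by
      have h1 : (C \ C').card + (C ∩ C').card = C.card :=
        Finset.card_sdiff_add_card_inter C C'
      have h2 : (C' \ C).card + (C' ∩ C).card = C'.card :=
        Finset.card_sdiff_add_card_inter C' C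
      have h3 : (C ∩ C').card = (C' ∩ C).card := by rw [Finset.inter_comm]
      omega
    obtain ⟨D, hD, hDcard⟩ := Finset.exists_subset_card_eq hcard
    have e : (C \ C' : Finset (Fin I)) ≃ (D : Finset (Fin I)) :=
      Finset.equivOfCardEq hDcard.symm
    have h1 : ∑ i ∈ C \ C', f i ≤ ∑ i ∈ D, f i := by
      rw [← Finset.sum_coe_sort (C \ C') f, ← Finset.sum_coe_sort D f]
      rw [← Equiv.sum_comp e (fun x : {x // x ∈ D} => f x)]
      apply Finset.sum_le_sum
      intro i _
      have hiC : (i : Fin I) ∈ C := (Finset.mem_sdiff.mp i.2).1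
      have heD : ((e i : {x // x ∈ D}) : Fin I) ∈ C' \ C := hD (e i).2
      exact hord i hiC (e i) (Finset.mem_sdiff.mp heD).2
    have h2 : ∑ i ∈ D, f i ≤ ∑ i ∈ C' \ C, f i :=
      Finset.sum_le_sum_of_subset_of_nonneg hD
        (fun j hj _ => hpos j (Finset.mem_sdiff.mp hj).2)
    have hsplitC : ∑ i ∈ C ∩ C', f i + ∑ i ∈ C \ C', f i = ∑ i ∈ C, f i :=
      Finset.sum_inter_add_sum_sdiff C C' f
    have hsplitC' : ∑ i ∈ C' ∩ C, f i + ∑ i ∈ C' \ C, f i = ∑ i ∈ C', f i :=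
      Finset.sum_inter_add_sum_sdiff C' C f
    have hint : ∑ i ∈ C ∩ C', f i = ∑ i ∈ C' ∩ C, f i := by rw [Finset.inter_comm]
    linarith
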